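/- Conversely (Gordan's theorem): for g_1, ..., g_m ∈ ℝⁿ, if there is no d ∈ ℝⁿ with g_jᵀ d < 0 for all j, then there exists λ ∈ ℝᵐ with λ_j ≥ 0, Σ_j λ_j = 1, and Σ_j λ_j g_j = 0. -/

import Mathlib

open scoped RealInnerProductSpace

/-- (Gordan's theorem, other direction.) If there is no `d` with `g_jᵀ d < 0` for all
`j`, then there is `λ ≥ 0` with `Σ_j λ_j = 1` and `Σ_j λ_j g_j = 0`. -/
theorem stmt_7 {n m : ℕ} (g : Fin m → EuclideanSpace ℝ (Fin n))
    (h : ¬ ∃ d : EuclideanSpace ℝ (Fin n), ∀ j, ⟪g j, d⟫ < 0) :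
    ∃ lam : Fin m → ℝ, (∀ j, 0 ≤ lam j) ∧ (∑ j, lam j = 1) ∧ ∑ j, lam j • g j = 0 := by
  have h0 : (0 : EuclideanSpace ℝ (Fin n)) ∈ convexHull ℝ (Set.range g) := by
    by_contra hc
    have hfin : (Set.range g).Finite := Set.finite_range g
    have hclosed : IsClosed (convexHull ℝ (Set.range g)) :=
      (hfin.isCompact_convexHull (𝕜 := ℝ)).isClosed
    obtain ⟨f, u, hfu, hub⟩ :=
      geometric_hahn_banach_point_closed (convex_convexHull ℝ _) hclosed hc
    have hu : 0 < u := by simpa using hfu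
    set y := (InnerProductSpace.toDual ℝ (EuclideanSpace ℝ (Fin n))).symm f with hy
    have hfy : ∀ x : EuclideanSpace ℝ (Fin n), ⟪y, x⟫ = f x := by
      intro x
      simp [hy, InnerProductSpace.toDual_symm_apply]
    refine h ⟨-y, fun j => ?_⟩
    have hj : u < f (g j) := hub _ (subset_convexHull ℝ _ ⟨j, rfl⟩)
    have : ⟪y, g j⟫ > 0 := by rw [hfy]; linarith
    have hsym : ⟪g j, -y⟫ = -⟪y, g j⟫ := by
      rw [inner_neg_right, real_inner_comm]
    rw [hsym]; linarith
  rw [convexHull_range_eq_exists_affineCombination] at h0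
  obtain ⟨s, w, hw0, hw1, hwc⟩ := h0
  rw [Finset.affineCombination_eq_linear_combination s g w hw1] at hwc
  refine ⟨fun j => if j ∈ s then w j else 0, ?_, ?_, ?_⟩
  · intro j
    by_cases hj : j ∈ s <;> simp [hj]
    exact hw0 j hj
  · rw [Finset.sum_ite_mem, Finset.univ_inter, hw1]
  · rw [← hwc, ← Finset.sum_subset (Finset.subset_univ s)]
    · exact Finset.sum_congr rfl fun j hj => by simp [hj]
    · intro j _ hj; simp [hj]
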